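/- Let r ≥ 4 be an integer, let P ∈ ℂ[x₁,x₂,x₃] be an irreducible homogeneous polynomial of degree r, and let v = v₁x₁ + v₂x₂ + v₃x₃ be a nonzero linear form. Then v = 0 is an undulation line of the curve P = 0 if and only if there exist a linear form u = u₁x₁ + u₂x₂ + u₃x₃ and homogeneous polynomials h, w ∈ ℂ[x₁,x₂,x₃] of degrees r−4 and r−1 respectively such that P = u⁴·h + v·w. -/

import Mathlib

open MvPolynomial

/-- The linear form `v₁x₁ + v₂x₂ + v₃x₃` associated to a coefficient vector `v`. -/
noncomputable def linForm (v : Fin 3 → ℂ) : MvPolynomial (Fin 3) ℂ :=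
  ∑ i, C (v i) * X i

/-- The binary form `q(s,t) = P(sA + tB)` obtained by restricting `P` to the plane
spanned by `A` and `B`. -/
noncomputable def binaryRestrict (P : MvPolynomial (Fin 3) ℂ) (A B : Fin 3 → ℂ) :
    MvPolynomial (Fin 2) ℂ :=
  aeval (fun i => (C (A i) * X 0 + C (B i) * X 1 : MvPolynomial (Fin 2) ℂ)) P

/-- `v₁x₁ + v₂x₂ + v₃x₃ = 0` is an undulation line of the curve `P = 0`. -/
def IsUndulationLine (P : MvPolynomial (Fin 3) ℂ) (v : Fin 3 → ℂ) : Prop :=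
  v ≠ 0 ∧ ∃ A B : Fin 3 → ℂ, LinearIndependent ℂ ![A, B] ∧
    (∑ i, v i * A i) = 0 ∧ (∑ i, v i * B i) = 0 ∧
    ∃ L : MvPolynomial (Fin 2) ℂ, L ≠ 0 ∧ L.IsHomogeneous 1 ∧
      L ^ 4 ∣ binaryRestrict P A B

/-- The curve `P = 0` has an undulation point. -/
def HasUndulationPoint (P : MvPolynomial (Fin 3) ℂ) : Prop :=
  ∃ v : Fin 3 → ℂ, IsUndulationLine P v

lemma linForm_coeff (v : Fin 3 → ℂ) (i : Fin 3) :
    (linForm v).coeff (Finsupp.single i 1) = v i := by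
  simp [linForm, coeff_sum, coeff_C_mul, coeff_X', Finsupp.single_left_inj]

lemma linForm_ne_zero {v : Fin 3 → ℂ} (hv : v ≠ 0) : linForm v ≠ 0 := by
  obtain ⟨i, hi⟩ := Function.ne_iff.mp hv
  intro h
  apply hi
  have := linForm_coeff v i
  rw [h] at this
  simpa using this.symm

lemma linForm_homog (v : Fin 3 → ℂ) : (linForm v).IsHomogeneous 1 := by
  apply MvPolynomial.IsHomogeneous.sum
  intro i _
  exact isHomogeneous_C_mul_X _ _

lemma linForm_smul (c : ℂ) (v : Fin 3 → ℂ) : linForm (c • v) = C c * linForm v := by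
  simp [linForm, Finset.mul_sum, mul_assoc]

lemma degree_one_single {σ : Type*} [DecidableEq σ] (d : σ →₀ ℕ) (hd : d.degree = 1) :
    ∃ i, d = Finsupp.single i 1 := by
  have hd0 : d ≠ 0 := by
    intro h; rw [h] at hd; simp at hd
  obtain ⟨i, hi⟩ : ∃ i, d i ≠ 0 := by
    by_contra h
    push_neg at h
    exact hd0 (Finsupp.ext fun a => h a)
  have hle : d i ≤ 1 := hd ▸ Finsupp.le_degree i d
  have hdi : d i = 1 := le_antisymm hle (Nat.one_le_iff_ne_zero.mpr hi)
  refine ⟨i, Finsupp.ext fun j => ?_⟩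
  by_cases hj : j = i
  · simp [hj, hdi]
  · simp [Finsupp.single_apply, Ne.symm hj]
    by_contra hdj
    have hsub : {i, j} ⊆ d.support := by
      intro a ha
      simp only [Finset.mem_insert, Finset.mem_singleton] at ha
      rcases ha with rfl | rfl <;> simp [Finsupp.mem_support_iff, hi, hdj]
    have : d i + d j ≤ d.degree := by
      rw [Finsupp.degree, ← Finset.sum_pair (Ne.symm hj)]
      exact Finset.sum_le_sum_of_subset hsub
    omega

lemma binary_homog_one {L : MvPolynomial (Fin 2) ℂ} (hL : L.IsHomogeneous 1) :
    L = C (L.coeff (Finsupp.single 0 1)) * X 0 + C (L.coeff (Finsupp.single 1 1)) * X 1 := by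
  apply MvPolynomial.ext
  intro d
  rw [coeff_add, coeff_C_mul, coeff_C_mul, coeff_X', coeff_X']
  by_cases h0 : d = Finsupp.single 0 1
  · subst h0; norm_num [Finsupp.single_left_inj]
  by_cases h1 : d = Finsupp.single 1 1
  · subst h1; norm_num [Finsupp.single_left_inj]
  · have : d.degree ≠ 1 := by
      intro h
      obtain ⟨i, rfl⟩ := degree_one_single d h
      fin_cases i <;> simp_all
    rw [hL.coeff_eq_zero this]
    rw [if_neg (fun h => h0 h.symm), if_neg (fun h => h1 h.symm)]
    ring

-- quotient homogeneity
lemma homog_of_mul {σ : Type*} {a w : MvPolynomial σ ℂ} {m n : ℕ}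
    (ha : a.IsHomogeneous m) (ha0 : a ≠ 0) (hmul : (a * w).IsHomogeneous n) :
    w.IsHomogeneous (n - m) := by
  classical
  set D := w.totalDegree with hD
  have hcomp : ∀ k, k ≠ n - m → homogeneousComponent k w = 0 := by
    intro k hk
    by_cases hkD : k ∈ Finset.range (D + 1)
    · -- a * w_k = homogeneousComponent (m+k) (a*w)
      have hsum : a * w = ∑ j ∈ Finset.range (D + 1), a * homogeneousComponent j w := by
        rw [← Finset.mul_sum, sum_homogeneousComponent]
      have hhc : homogeneousComponent (m + k) (a * w) = a * homogeneousComponent k w := by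
        rw [hsum, map_sum]
        rw [Finset.sum_eq_single k]
        · rw [homogeneousComponent_of_mem
            ((mem_homogeneousSubmodule _ _).mpr (ha.mul (homogeneousComponent_isHomogeneous k w)))]
          simp
        · intro j _ hjk
          rw [homogeneousComponent_of_mem
            ((mem_homogeneousSubmodule _ _).mpr (ha.mul (homogeneousComponent_isHomogeneous j w)))]
          simp [hjk, Nat.add_right_cancel_iff]
          intro h; omega
        · intro h; exact absurd hkD h
      have hz : homogeneousComponent (m + k) (a * w) = 0 := by
        rw [homogeneousComponent_of_mem ((mem_homogeneousSubmodule _ _).mpr hmul)]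
        rw [if_neg (by omega)]
      rw [hhc] at hz
      rcases mul_eq_zero.mp hz with h | h
      · exact absurd h ha0
      · exact h
    · apply homogeneousComponent_eq_zero
      simp only [Finset.mem_range, not_lt] at hkD
      omega
  have hw : w = homogeneousComponent (n - m) w := by
    conv_lhs => rw [← sum_homogeneousComponent w]
    rw [Finset.sum_eq_single (n - m)]
    · intro j _ hj; exact hcomp j hj
    · intro h
      apply homogeneousComponent_eq_zero
      simp only [Finset.mem_range, not_lt] at h
      omega
  rw [hw]
  exact homogeneousComponent_isHomogeneous _ _

lemma not_isUnit_homog {σ : Type*} {p : MvPolynomial σ ℂ} {n : ℕ}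
    (hp : p.IsHomogeneous n) (hn : n ≠ 0) : ¬ IsUnit p := by
  intro hu
  obtain ⟨q, hq⟩ := hu.exists_right_inv
  have hp0 : p ≠ 0 := by rintro rfl; simp at hq
  have hq0 : q.IsHomogeneous 0 := by
    have := homog_of_mul hp hp0 (hq ▸ isHomogeneous_one σ ℂ)
    simpa using this
  have h1 : (1 : MvPolynomial σ ℂ).IsHomogeneous n := by
    rw [← hq]; simpa using hp.mul hq0
  exact hn (h1.inj_right (isHomogeneous_one σ ℂ) one_ne_zero)

-- composition of aeval with linear substitution
lemma aeval_aeval_linear {k l m : ℕ} (M : Matrix (Fin k) (Fin l) ℂ)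
    (f : Fin l → MvPolynomial (Fin m) ℂ) (p : MvPolynomial (Fin k) ℂ) :
    aeval f (aeval (fun i => ∑ j, C (M i j) * X j) p)
      = aeval (fun i => ∑ j, C (M i j) * f j) p := by
  have : (aeval f).comp (aeval (fun i => ∑ j, C (M i j) * X j))
      = aeval (R := ℂ) (fun i => ∑ j, C (M i j) * f j) := by
    apply MvPolynomial.algHom_ext
    intro i
    simp [aeval_C, algebraMap_eq]
  exact DFunLike.congr_fun this p

lemma sum_C_mul_lin (t A B : Fin 3 → ℂ) :
    (∑ i, C (t i) * (C (A i) * X 0 + C (B i) * X 1) : MvPolynomial (Fin 2) ℂ)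
      = C (∑ i, t i * A i) * X 0 + C (∑ i, t i * B i) * X 1 := by
  simp only [mul_add, Finset.sum_add_distrib, ← mul_assoc, ← C_mul]
  rw [← Finset.sum_mul, ← Finset.sum_mul, ← map_sum, ← map_sum]

lemma binaryRestrict_linForm (t A B : Fin 3 → ℂ) :
    binaryRestrict (linForm t) A B
      = C (∑ i, t i * A i) * X 0 + C (∑ i, t i * B i) * X 1 := by
  rw [binaryRestrict, linForm, map_sum, ← sum_C_mul_lin]
  simp [aeval_C, algebraMap_eq]

lemma binaryRestrict_homog {P : MvPolynomial (Fin 3) ℂ} {n : ℕ} (hP : P.IsHomogeneous n)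
    (A B : Fin 3 → ℂ) : (binaryRestrict P A B).IsHomogeneous n := by
  have := hP.aeval (fun i => (C (A i) * X 0 + C (B i) * X 1 : MvPolynomial (Fin 2) ℂ))
    (fun i => ((isHomogeneous_C_mul_X _ _).add (isHomogeneous_C_mul_X _ _)))
  simpa [binaryRestrict] using this

-- X 2 divides polynomials that restrict to zero on the plane x2 = 0
lemma X2_dvd_sub (p : MvPolynomial (Fin 3) ℂ) :
    (X 2 : MvPolynomial (Fin 3) ℂ) ∣
      p - aeval ![X 0, X 1] (aeval ![X 0, X 1, (0 : MvPolynomial (Fin 2) ℂ)] p) := by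
  induction p using MvPolynomial.induction_on with
  | C a => simp [aeval_C, algebraMap_eq]
  | add p q hp hq =>
      have : p + q - aeval ![X 0, X 1] (aeval ![X 0, X 1, (0 : MvPolynomial (Fin 2) ℂ)] (p + q))
          = (p - aeval ![X 0, X 1] (aeval ![X 0, X 1, (0 : MvPolynomial (Fin 2) ℂ)] p))
            + (q - aeval ![X 0, X 1] (aeval ![X 0, X 1, (0 : MvPolynomial (Fin 2) ℂ)] q)) := by
        simp only [map_add]; ring
      rw [this]
      exact dvd_add hp hq
  | mul_X p i hp =>
      fin_cases i
      · show (X 2 : MvPolynomial (Fin 3) ℂ) ∣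
          p * X 0 - aeval ![X 0, X 1] (aeval ![X 0, X 1, (0 : MvPolynomial (Fin 2) ℂ)] (p * X 0))
        have : p * X 0 - aeval ![X 0, X 1] (aeval ![X 0, X 1, (0 : MvPolynomial (Fin 2) ℂ)] (p * X 0))
            = (p - aeval ![X 0, X 1] (aeval ![X 0, X 1, (0 : MvPolynomial (Fin 2) ℂ)] p)) * X 0 := by
          simp only [map_mul, aeval_X, Matrix.cons_val_zero, Matrix.cons_val_one, Matrix.head_cons]
          ring
        rw [this]; exact hp.mul_right _
      · show (X 2 : MvPolynomial (Fin 3) ℂ) ∣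
          p * X 1 - aeval ![X 0, X 1] (aeval ![X 0, X 1, (0 : MvPolynomial (Fin 2) ℂ)] (p * X 1))
        have : p * X 1 - aeval ![X 0, X 1] (aeval ![X 0, X 1, (0 : MvPolynomial (Fin 2) ℂ)] (p * X 1))
            = (p - aeval ![X 0, X 1] (aeval ![X 0, X 1, (0 : MvPolynomial (Fin 2) ℂ)] p)) * X 1 := by
          simp only [map_mul, aeval_X, Matrix.cons_val_zero, Matrix.cons_val_one, Matrix.head_cons]
          ring
        rw [this]; exact hp.mul_right _
      · show (X 2 : MvPolynomial (Fin 3) ℂ) ∣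
          p * X 2 - aeval ![X 0, X 1] (aeval ![X 0, X 1, (0 : MvPolynomial (Fin 2) ℂ)] (p * X 2))
        have : p * X 2 - aeval ![X 0, X 1] (aeval ![X 0, X 1, (0 : MvPolynomial (Fin 2) ℂ)] (p * X 2))
            = p * X 2 := by
          simp only [map_mul, aeval_X]
          simp
        rw [this]; exact Dvd.intro_left p rfl

lemma exists_matrices (A B v : Fin 3 → ℂ) (hAB : LinearIndependent ℂ ![A, B])
    (hvA : ∑ i, v i * A i = 0) (hvB : ∑ i, v i * B i = 0) (hv : v ≠ 0) :
    ∃ (M N : Matrix (Fin 3) (Fin 3) ℂ) (c : ℂ),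
      M * N = 1 ∧ N * M = 1 ∧ (∀ i, M i 0 = A i) ∧ (∀ i, M i 1 = B i) ∧
      c ≠ 0 ∧ linForm (fun k => N 2 k) = C c * linForm v := by
  obtain ⟨k0, hk0⟩ := Function.ne_iff.mp hv
  simp only [Pi.zero_apply] at hk0
  set Cv : Fin 3 → ℂ := Pi.single k0 1 with hCv
  set M : Matrix (Fin 3) (Fin 3) ℂ := Matrix.of (fun i j => ![A, B, Cv] j i) with hM
  have hM0 : ∀ i, M i 0 = A i := fun i => rfl
  have hM1 : ∀ i, M i 1 = B i := fun i => rfl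
  have hM2 : ∀ i, M i 2 = Cv i := fun i => rfl
  have dotsingle : ∀ x : Fin 3 → ℂ, (∑ i, x i * Cv i) = x k0 := by
    intro x
    rw [Finset.sum_eq_single k0]
    · simp [hCv]
    · intro b _ hb
      simp [hCv, Pi.single_eq_of_ne hb]
    · intro h; exact absurd (Finset.mem_univ k0) h
  have expand : ∀ c0 c1 c2 : ℂ, (∑ i, v i * (c0 * A i + c1 * B i + c2 * Cv i))
      = c0 * (∑ i, v i * A i) + c1 * (∑ i, v i * B i) + c2 * (∑ i, v i * Cv i) := by
    intro c0 c1 c2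
    simp only [Finset.mul_sum, ← Finset.sum_add_distrib]
    exact Finset.sum_congr rfl fun i _ => by ring
  have hdet : M.det ≠ 0 := by
    intro hd
    obtain ⟨c, hc0, hc⟩ := Matrix.exists_mulVec_eq_zero_iff.mpr hd
    have hcoord : ∀ i, c 0 * A i + c 1 * B i + c 2 * Cv i = 0 := by
      intro i
      have := congrFun hc i
      simpa [Matrix.mulVec, dotProduct, Fin.sum_univ_three, hM, mul_comm] using this
    have h2 : c 2 = 0 := by
      have hz : (∑ i, v i * (c 0 * A i + c 1 * B i + c 2 * Cv i)) = 0 := by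
        simp [hcoord]
      rw [expand, hvA, hvB, dotsingle] at hz
      simp at hz
      rcases hz with h | h
      · exact h
      · exact absurd h hk0
    have hpair := LinearIndependent.pair_iff.mp hAB (c 0) (c 1) (by
      funext i
      have := hcoord i
      rw [h2] at this
      simpa using this)
    apply hc0
    funext i
    fin_cases i
    · exact hpair.1
    · exact hpair.2
    · exact h2
  have hdu : IsUnit M.det := isUnit_iff_ne_zero.mpr hdet
  set N := M⁻¹ with hN
  have hMN : M * N = 1 := Matrix.mul_nonsing_inv M hdu
  have hNM : N * M = 1 := Matrix.nonsing_inv_mul M hdu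
  set γ : Fin 3 → ℂ := fun k => N 2 k with hγdef
  have hNMapp : ∀ j : Fin 3, (∑ k, γ k * M k j) = (1 : Matrix (Fin 3) (Fin 3) ℂ) 2 j := by
    intro j
    rw [← hNM, Matrix.mul_apply]
  have hγA : (∑ k, γ k * A k) = 0 := by
    have := hNMapp 0
    simp only [Matrix.one_apply] at this
    simpa [hM0] using this
  have hγB : (∑ k, γ k * B k) = 0 := by
    have := hNMapp 1
    simp only [Matrix.one_apply] at this
    simpa [hM1] using this
  have hγC : γ k0 = 1 := by
    have := hNMapp 2
    simp only [Matrix.one_apply] at this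
    rw [← dotsingle γ]
    simpa [hM2] using this
  set δ : Fin 3 → ℂ := fun i => v k0 * γ i - v i with hδdef
  have expand2 : ∀ x : Fin 3 → ℂ, (∑ i, δ i * x i)
      = v k0 * (∑ i, γ i * x i) - (∑ i, v i * x i) := by
    intro x
    simp only [Finset.mul_sum, ← Finset.sum_sub_distrib]
    exact Finset.sum_congr rfl fun i _ => by simp [hδdef]; ring
  have hδM : Matrix.vecMul δ M = 0 := by
    funext j
    show dotProduct δ (fun i => M i j) = 0
    rw [dotProduct]
    fin_cases j
    · show (∑ i, δ i * M i 0) = 0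
      rw [Finset.sum_congr rfl fun i _ => by rw [hM0 i], expand2, hγA, hvA]; ring
    · show (∑ i, δ i * M i 1) = 0
      rw [Finset.sum_congr rfl fun i _ => by rw [hM1 i], expand2, hγB, hvB]; ring
    · show (∑ i, δ i * M i 2) = 0
      rw [Finset.sum_congr rfl fun i _ => by rw [hM2 i], expand2, dotsingle, dotsingle, hγC]; ring
  have hδ0 : δ = 0 := by
    have h1 : Matrix.vecMul (Matrix.vecMul δ M) N = Matrix.vecMul δ (M * N) :=
      (Matrix.vecMul_vecMul δ M N)
    rw [hδM, hMN, Matrix.vecMul_one, Matrix.zero_vecMul] at h1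
    exact h1.symm
  have hveq : ∀ i, v i = v k0 * γ i := by
    intro i
    have := congrFun hδ0 i
    simp only [hδdef, Pi.zero_apply] at this
    linear_combination -this
  refine ⟨M, N, (v k0)⁻¹, hMN, hNM, hM0, hM1, inv_ne_zero hk0, ?_⟩
  have hlv : linForm v = C (v k0) * linForm γ := by
    rw [linForm, linForm, Finset.mul_sum]
    exact Finset.sum_congr rfl fun i _ => by rw [hveq i, C_mul]; ring
  rw [hlv, ← mul_assoc, ← C_mul, inv_mul_cancel₀ hk0, C_1, one_mul]

lemma linForm_dvd {g : MvPolynomial (Fin 3) ℂ} {n : ℕ} (hg : g.IsHomogeneous n)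
    {A B v : Fin 3 → ℂ} (hAB : LinearIndependent ℂ ![A, B])
    (hvA : ∑ i, v i * A i = 0) (hvB : ∑ i, v i * B i = 0) (hv : v ≠ 0)
    (h0 : binaryRestrict g A B = 0) :
    ∃ w : MvPolynomial (Fin 3) ℂ, w.IsHomogeneous (n - 1) ∧ g = linForm v * w := by
  obtain ⟨M, N, c, hMN, hNM, hM0, hM1, hc, hγ⟩ := exists_matrices A B v hAB hvA hvB hv
  set φg := aeval (fun i => ∑ j, C (M i j) * X j) g with hφg
  have hres : aeval ![X 0, X 1, (0 : MvPolynomial (Fin 2) ℂ)] φg = 0 := by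
    rw [hφg, aeval_aeval_linear]
    have heq : (aeval fun i => ∑ j, C (M i j) * ![X 0, X 1, (0 : MvPolynomial (Fin 2) ℂ)] j) g
        = binaryRestrict g A B := by
      have hfun : (fun i => ∑ j, C (M i j) * ![X 0, X 1, (0 : MvPolynomial (Fin 2) ℂ)] j)
          = (fun i => (C (A i) * X 0 + C (B i) * X 1 : MvPolynomial (Fin 2) ℂ)) := by
        funext i
        rw [Fin.sum_univ_three]
        simp only [Matrix.cons_val_zero, Matrix.cons_val_one, Matrix.head_cons,
          Matrix.cons_val_two, Matrix.tail_cons, hM0 i, hM1 i, mul_zero, add_zero]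
      rw [binaryRestrict, hfun]
    rw [heq, h0]
  have hdvd : (X 2 : MvPolynomial (Fin 3) ℂ) ∣ φg := by
    have := X2_dvd_sub φg
    rwa [hres, map_zero, sub_zero] at this
  obtain ⟨W, hW⟩ := hdvd
  have hid : aeval (fun j => ∑ k, C (N j k) * X k) φg = g := by
    rw [hφg, aeval_aeval_linear]
    have hfun : (fun i => ∑ j, C (M i j) * (∑ k, C (N j k) * X k))
        = (fun i => (X i : MvPolynomial (Fin 3) ℂ)) := by
      funext i
      calc (∑ j, C (M i j) * (∑ k, C (N j k) * X k) : MvPolynomial (Fin 3) ℂ)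
          = ∑ j, ∑ k, C (M i j * N j k) * X k := by
            simp only [Finset.mul_sum, C_mul, mul_assoc]
        _ = ∑ k, ∑ j, C (M i j * N j k) * X k := Finset.sum_comm
        _ = ∑ k, C ((M * N) i k) * X k := by
            refine Finset.sum_congr rfl fun k _ => ?_
            rw [← Finset.sum_mul, ← map_sum, Matrix.mul_apply]
        _ = X i := by
            rw [hMN]
            simp [Matrix.one_apply, apply_ite C, Finset.sum_ite_eq]
    rw [hfun, aeval_X_left_apply]
  have hg2 : g = linForm (fun k => N 2 k) * aeval (fun j => ∑ k, C (N j k) * X k) W := by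
    calc g = aeval (fun j => ∑ k, C (N j k) * X k) φg := hid.symm
      _ = aeval (fun j => ∑ k, C (N j k) * X k) (X 2 * W) := by rw [← hW]
      _ = linForm (fun k => N 2 k) * aeval (fun j => ∑ k, C (N j k) * X k) W := by
          rw [map_mul, aeval_X]; rfl
  rw [hγ] at hg2
  refine ⟨C c * aeval (fun j => ∑ k, C (N j k) * X k) W, ?_, ?_⟩
  · apply homog_of_mul (linForm_homog v) (linForm_ne_zero hv)
    have : linForm v * (C c * aeval (fun j => ∑ k, C (N j k) * X k) W) = g := by
      rw [hg2]; ring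
    rw [this]; exact hg
  · rw [hg2]; ring

/-- Lemma 3.1. For `r ≥ 4`, an irreducible homogeneous `P` of degree `r`
and a nonzero linear form `v`, `v = 0` is an undulation line of `P = 0` iff
`P = u⁴·h + v·w` for some linear form `u` and homogeneous `h, w` of degrees `r-4`, `r-1`. -/
theorem undulation_line_iff_decomposition
    (r : ℕ) (hr : 4 ≤ r) (P : MvPolynomial (Fin 3) ℂ)
    (hP : P.IsHomogeneous r) (hirr : Irreducible P)
    (v : Fin 3 → ℂ) (hv : v ≠ 0) :
    IsUndulationLine P v ↔
      ∃ (u : Fin 3 → ℂ) (h w : MvPolynomial (Fin 3) ℂ),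
        h.IsHomogeneous (r - 4) ∧ w.IsHomogeneous (r - 1) ∧
        P = linForm u ^ 4 * h + linForm v * w := by
  constructor
  · rintro ⟨-, A, B, hAB, hvA, hvB, L, hL0, hL1, H, hQ⟩
    obtain ⟨M, N, c, hMN, hNM, hM0, hM1, hc, hγ⟩ := exists_matrices A B v hAB hvA hvB hv
    have hNMe : ∀ p q : Fin 3, (∑ i, N p i * M i q) = (1 : Matrix (Fin 3) (Fin 3) ℂ) p q :=
      fun p q => by rw [← hNM, Matrix.mul_apply]
    set a := L.coeff (Finsupp.single 0 1) with ha
    set b := L.coeff (Finsupp.single 1 1) with hb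
    have hLab : L = C a * X 0 + C b * X 1 := binary_homog_one hL1
    set u : Fin 3 → ℂ := fun i => a * N 0 i + b * N 1 i with hu
    have huA : (∑ i, u i * A i) = a := by
      calc (∑ i, u i * A i) = ∑ i, (a * (N 0 i * M i 0) + b * (N 1 i * M i 0)) :=
            Finset.sum_congr rfl fun i _ => by rw [← hM0 i]; show (a * N 0 i + b * N 1 i) * M i 0 = _; ring
        _ = a * (∑ i, N 0 i * M i 0) + b * (∑ i, N 1 i * M i 0) := by
            rw [Finset.sum_add_distrib, Finset.mul_sum, Finset.mul_sum]
        _ = a := by rw [hNMe 0 0, hNMe 1 0]; simp [Matrix.one_apply]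
    have huB : (∑ i, u i * B i) = b := by
      calc (∑ i, u i * B i) = ∑ i, (a * (N 0 i * M i 1) + b * (N 1 i * M i 1)) :=
            Finset.sum_congr rfl fun i _ => by rw [← hM1 i]; show (a * N 0 i + b * N 1 i) * M i 1 = _; ring
        _ = a * (∑ i, N 0 i * M i 1) + b * (∑ i, N 1 i * M i 1) := by
            rw [Finset.sum_add_distrib, Finset.mul_sum, Finset.mul_sum]
        _ = b := by rw [hNMe 0 1, hNMe 1 1]; simp [Matrix.one_apply]
    -- H is homogeneous of degree r - 4
    have hQP : (binaryRestrict P A B).IsHomogeneous r := binaryRestrict_homog hP A B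
    have hL4 : ((L : MvPolynomial (Fin 2) ℂ) ^ 4).IsHomogeneous 4 := by
      simpa using hL1.pow 4
    have hH : H.IsHomogeneous (r - 4) :=
      homog_of_mul hL4 (pow_ne_zero 4 hL0) (hQ ▸ hQP)
    -- lift H to three variables
    set R : Matrix (Fin 2) (Fin 3) ℂ := Matrix.of ![N 0, N 1] with hR
    set h : MvPolynomial (Fin 3) ℂ := aeval (fun j => ∑ i, C (R j i) * X i) H with hh
    have hhom : h.IsHomogeneous (r - 4) := by
      have := hH.aeval (fun j => ∑ i, C (R j i) * X i)
        (fun j => MvPolynomial.IsHomogeneous.sum _ _ _ fun i _ => isHomogeneous_C_mul_X _ _)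
      simpa [hh] using this
    have hBRh : binaryRestrict h A B = H := by
      rw [hh, binaryRestrict, aeval_aeval_linear]
      have hfun : (fun j => ∑ i, C (R j i) * (C (A i) * X 0 + C (B i) * X 1))
          = (fun j => (X j : MvPolynomial (Fin 2) ℂ)) := by
        funext j
        rw [sum_C_mul_lin]
        have key : ∀ (p : Fin 3) (x : Fin 3 → ℂ) (q : Fin 3), (∀ i, M i q = x i) →
            (∑ i, N p i * x i) = (1 : Matrix (Fin 3) (Fin 3) ℂ) p q := by
          intro p x q hq
          rw [Finset.sum_congr rfl fun i _ => by rw [← hq i], hNMe p q]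
        fin_cases j
        · show C (∑ i, N 0 i * A i) * X 0 + C (∑ i, N 0 i * B i) * X 1 = X 0
          rw [key 0 A 0 hM0, key 0 B 1 hM1]
          simp [Matrix.one_apply]
        · show C (∑ i, N 1 i * A i) * X 0 + C (∑ i, N 1 i * B i) * X 1 = X 1
          rw [key 1 A 0 hM0, key 1 B 1 hM1]
          simp [Matrix.one_apply]
      rw [hfun, aeval_X_left_apply]
    have hBRu : binaryRestrict (linForm u) A B = L := by
      rw [binaryRestrict_linForm, huA, huB, ← hLab]
    set g : MvPolynomial (Fin 3) ℂ := P - linForm u ^ 4 * h with hg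
    have hghom : g.IsHomogeneous r := by
      apply hP.sub
      have := ((linForm_homog u).pow 4).mul hhom
      rwa [show 1 * 4 + (r - 4) = r by omega] at this
    have hBRg : binaryRestrict g A B = 0 := by
      have e : binaryRestrict g A B
          = binaryRestrict P A B - binaryRestrict (linForm u) A B ^ 4 * binaryRestrict h A B := by
        rw [hg, binaryRestrict, binaryRestrict, binaryRestrict, binaryRestrict,
          map_sub, map_mul, map_pow]
      rw [e, hQ, hBRu, hBRh]; ring
    obtain ⟨w, hwhom, hgw⟩ := linForm_dvd hghom hAB hvA hvB hv hBRg
    exact ⟨u, h, w, hhom, hwhom, by linear_combination hgw⟩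
  · rintro ⟨u, h, w, hh, hw, hPeq⟩
    obtain ⟨k0, hk0⟩ := Function.ne_iff.mp hv
    simp only [Pi.zero_apply] at hk0
    have hdist : ∀ k : Fin 3, k + 1 ≠ k ∧ k + 2 ≠ k ∧ k + 1 ≠ k + 2 := by decide
    obtain ⟨hd1, hd2, hd3⟩ := hdist k0
    set i1 := k0 + 1 with hi1
    set i2 := k0 + 2 with hi2
    have dsing : ∀ (x : Fin 3 → ℂ) (j : Fin 3), (∑ i, x i * (Pi.single j (1 : ℂ) : Fin 3 → ℂ) i) = x j := by
      intro x j
      rw [Finset.sum_eq_single j]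
      · simp
      · intro i _ hij
        rw [Pi.single_eq_of_ne hij, mul_zero]
      · intro hmem; exact absurd (Finset.mem_univ j) hmem
    set A : Fin 3 → ℂ := fun i => v k0 * (Pi.single i1 (1 : ℂ) : Fin 3 → ℂ) i - v i1 * (Pi.single k0 (1 : ℂ) : Fin 3 → ℂ) i
      with hA
    set B : Fin 3 → ℂ := fun i => v k0 * (Pi.single i2 (1 : ℂ) : Fin 3 → ℂ) i - v i2 * (Pi.single k0 (1 : ℂ) : Fin 3 → ℂ) i
      with hB
    have dotA : ∀ x : Fin 3 → ℂ, (∑ i, x i * A i) = v k0 * x i1 - v i1 * x k0 := by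
      intro x
      rw [Finset.sum_congr rfl (fun i _ => show x i * A i
            = v k0 * (x i * (Pi.single i1 (1 : ℂ) : Fin 3 → ℂ) i) - v i1 * (x i * (Pi.single k0 (1 : ℂ) : Fin 3 → ℂ) i) by
          rw [hA]; ring)]
      rw [Finset.sum_sub_distrib, ← Finset.mul_sum, ← Finset.mul_sum, dsing, dsing]
    have dotB : ∀ x : Fin 3 → ℂ, (∑ i, x i * B i) = v k0 * x i2 - v i2 * x k0 := by
      intro x
      rw [Finset.sum_congr rfl (fun i _ => show x i * B i
            = v k0 * (x i * (Pi.single i2 (1 : ℂ) : Fin 3 → ℂ) i) - v i2 * (x i * (Pi.single k0 (1 : ℂ) : Fin 3 → ℂ) i) by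
          rw [hB]; ring)]
      rw [Finset.sum_sub_distrib, ← Finset.mul_sum, ← Finset.mul_sum, dsing, dsing]
    have hvA : (∑ i, v i * A i) = 0 := by rw [dotA]; ring
    have hvB : (∑ i, v i * B i) = 0 := by rw [dotB]; ring
    have hAi1 : A i1 = v k0 := by
      show v k0 * (Pi.single i1 (1 : ℂ) : Fin 3 → ℂ) i1 - v i1 * (Pi.single k0 (1 : ℂ) : Fin 3 → ℂ) i1 = v k0
      rw [Pi.single_eq_same, Pi.single_eq_of_ne hd1]; ring
    have hAi2 : A i2 = 0 := by
      show v k0 * (Pi.single i1 (1 : ℂ) : Fin 3 → ℂ) i2 - v i1 * (Pi.single k0 (1 : ℂ) : Fin 3 → ℂ) i2 = 0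
      rw [Pi.single_eq_of_ne (Ne.symm hd3), Pi.single_eq_of_ne hd2]; ring
    have hBi1 : B i1 = 0 := by
      show v k0 * (Pi.single i2 (1 : ℂ) : Fin 3 → ℂ) i1 - v i2 * (Pi.single k0 (1 : ℂ) : Fin 3 → ℂ) i1 = 0
      rw [Pi.single_eq_of_ne hd3, Pi.single_eq_of_ne hd1]; ring
    have hBi2 : B i2 = v k0 := by
      show v k0 * (Pi.single i2 (1 : ℂ) : Fin 3 → ℂ) i2 - v i2 * (Pi.single k0 (1 : ℂ) : Fin 3 → ℂ) i2 = v k0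
      rw [Pi.single_eq_same, Pi.single_eq_of_ne hd2]; ring
    have hAB : LinearIndependent ℂ ![A, B] := by
      rw [LinearIndependent.pair_iff]
      intro s t hst
      have h1 := congrFun hst i1
      have h2 := congrFun hst i2
      simp only [Pi.add_apply, Pi.smul_apply, smul_eq_mul, Pi.zero_apply, hAi1, hBi1, hAi2,
        hBi2] at h1 h2
      have hs : s * v k0 + t * 0 = 0 := h1
      have ht : s * 0 + t * v k0 = 0 := h2
      constructor
      · have : s * v k0 = 0 := by linear_combination hs
        rcases mul_eq_zero.mp this with h | h
        · exact h
        · exact absurd h hk0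
      · have : t * v k0 = 0 := by linear_combination ht
        rcases mul_eq_zero.mp this with h | h
        · exact h
        · exact absurd h hk0
    set L : MvPolynomial (Fin 2) ℂ := binaryRestrict (linForm u) A B with hL
    have hL1 : L.IsHomogeneous 1 := binaryRestrict_homog (linForm_homog u) A B
    have hBRv : binaryRestrict (linForm v) A B = 0 := by
      rw [binaryRestrict_linForm, hvA, hvB]; simp
    have hBRP : binaryRestrict P A B = L ^ 4 * binaryRestrict h A B := by
      have e : binaryRestrict P A B = binaryRestrict (linForm u) A B ^ 4 * binaryRestrict h A B
          + binaryRestrict (linForm v) A B * binaryRestrict w A B := by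
        rw [binaryRestrict, binaryRestrict, binaryRestrict, binaryRestrict, binaryRestrict, hPeq,
          map_add, map_mul, map_mul, map_pow]
      rw [e, hBRv, zero_mul, add_zero, hL]
    have hL0 : L ≠ 0 := by
      intro hLz
      have hBP0 : binaryRestrict P A B = 0 := by rw [hBRP, hLz]; ring
      obtain ⟨w', hw', hPw⟩ := linForm_dvd hP hAB hvA hvB hv hBP0
      rcases hirr.isUnit_or_isUnit hPw with hun | hun
      · exact not_isUnit_homog (linForm_homog v) one_ne_zero hun
      · exact not_isUnit_homog hw' (by omega) hun
    exact ⟨hv, A, B, hAB, hvA, hvB, L, hL0, hL1, binaryRestrict h A B, hBRP⟩
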